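/- Fix $e\ge2$ and a prime $p$, and let $b\in\mathbb Z_{\ge0}$. Let $\mathtt t$ be a standard tableau of size $n$ with at most two columns such that $\mathtt s:=\operatorname{reg}_{ep^b}(\mathtt t)\ne\mathtt t$ and $e\nmid\pi_{\mathtt t}(n)+1$. Then $\mathtt t$ is $e$-regular if and only if $\mathtt s$ is not $e$-regular. -/

import Mathlib

open scoped Classical
noncomputable section

def isWall (e x : ℤ) : Prop := 0 < x + 1 ∧ (x + 1) % e = 0

def degStep (e u v : ℤ) : ℤ :=
  if isWall e u ∧ v < u then 1
  else if isWall e v ∧ v < u then -1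
  else 0

def pathDeg (e : ℤ) (π : ℕ → ℤ) (r s : ℕ) : ℤ :=
  ∑ a ∈ Finset.Ico r s, degStep e (π a) (π (a + 1))

/-- A nonnegative `±1`-path on the interval `[u,v]`. -/
def IsPathOn (π : ℕ → ℤ) (u v : ℕ) : Prop :=
  (∀ a, u ≤ a → a ≤ v → 0 ≤ π a) ∧
  (∀ a, u ≤ a → a < v → π (a + 1) = π a + 1 ∨ π (a + 1) = π a - 1)

/-- `π[r,s]` is a positive arc (within `[u,v]`). -/
def IsPosArc (e : ℤ) (π : ℕ → ℤ) (u v r s : ℕ) : Prop :=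
  u ≤ r ∧ r < s ∧ s ≤ v ∧ isWall e (π r) ∧ π s = π r ∧
    ∀ c, r < c → c < s → π r < π c ∧ π c < π r + e

/-- `π[r,s]` is a negative arc (within `[u,v]`). -/
def IsNegArc (e : ℤ) (π : ℕ → ℤ) (u v r s : ℕ) : Prop :=
  u ≤ r ∧ r < s ∧ s ≤ v ∧ isWall e (π r) ∧ π s = π r ∧
    ∀ c, r < c → c < s → π r - e < π c ∧ π c < π r

def posArcs (e : ℤ) (π : ℕ → ℤ) (u v : ℕ) : Set (ℕ × ℕ) :=
  {p | IsPosArc e π u v p.1 p.2}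

def negArcs (e : ℤ) (π : ℕ → ℤ) (u v : ℕ) : Set (ℕ × ℕ) :=
  {p | IsNegArc e π u v p.1 p.2}


def wallTimes (f : ℤ) (n : ℕ) (π : ℕ → ℤ) : Finset ℕ :=
  (Finset.range (n + 1)).filter fun a => isWall f (π a)

/-- The regularisation map on paths: reflect the tail after the last wall
visit upward in the wall, if the endpoint lies strictly below that wall. -/
def regPath (f : ℤ) (n : ℕ) (π : ℕ → ℤ) : ℕ → ℤ :=
  if h : (wallTimes f n π).Nonempty then
    let a := (wallTimes f n π).max' h
    if π n < π a then (fun b => if b ≤ a then π b else 2 * π a - π b) else π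
  else π

/-- A standard tableau of size `n` (0-based nodes): injective, image is a
Young diagram (downward closed), entries increase along rows and columns. -/
def IsStdTab (n : ℕ) (t : Fin n → ℕ × ℕ) : Prop :=
  Function.Injective t ∧
  (∀ r : Fin n, ∀ a b : ℕ, a ≤ (t r).1 → b ≤ (t r).2 → ∃ r' : Fin n, t r' = (a, b)) ∧
  (∀ r s : Fin n, (t r).1 ≤ (t s).1 → (t r).2 ≤ (t s).2 → r ≤ s)

/-- Number of entries among the first `a` entries lying in column `j`. -/
def cntCol (n : ℕ) (t : Fin n → ℕ × ℕ) (a j : ℕ) : ℕ :=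
  (Finset.univ.filter fun r : Fin n => (r : ℕ) < a ∧ (t r).2 = j).card

/-- The type-`A₁` path attached to a two-column tableau. -/
def pth (n : ℕ) (t : Fin n → ℕ × ℕ) (a : ℕ) : ℤ :=
  (cntCol n t a 0 : ℤ) - (cntCol n t a 1 : ℤ)

/-- Membership in the Young diagram of `(2^x, 1^y)` (0-based). -/
def memShape2 (x y : ℕ) (v : ℕ × ℕ) : Prop :=
  (v.1 < x ∧ v.2 < 2) ∨ (x ≤ v.1 ∧ v.1 < x + y ∧ v.2 = 0)

/-- The residue of a node (0-based): column minus row, mod `e`. -/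
def resNode (e : ℕ) (v : ℕ × ℕ) : ZMod e := (v.2 : ZMod e) - (v.1 : ZMod e)

lemma cntCol_succ (n : ℕ) (t : Fin n → ℕ × ℕ) (a j : ℕ) (ha : a < n) :
    cntCol n t (a+1) j = cntCol n t a j + (if (t ⟨a, ha⟩).2 = j then 1 else 0) := by
  unfold cntCol
  have hsplit : (Finset.univ.filter fun r : Fin n => (r:ℕ) < a+1 ∧ (t r).2 = j)
      = (Finset.univ.filter fun r : Fin n => (r:ℕ) < a ∧ (t r).2 = j)
        ∪ (Finset.univ.filter fun r : Fin n => (r:ℕ) = a ∧ (t r).2 = j) := by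
    ext r
    simp only [Finset.mem_filter, Finset.mem_union, Finset.mem_univ, true_and]
    constructor
    · rintro ⟨h1, h2⟩; rcases Nat.lt_succ_iff_lt_or_eq.mp h1 with h | h
      · exact Or.inl ⟨h, h2⟩
      · exact Or.inr ⟨h, h2⟩
    · rintro (⟨h1, h2⟩ | ⟨h1, h2⟩) <;> exact ⟨by omega, h2⟩
  rw [hsplit, Finset.card_union_of_disjoint]
  · congr 1
    by_cases h : (t ⟨a, ha⟩).2 = j
    · rw [if_pos h]
      have : (Finset.univ.filter fun r : Fin n => (r:ℕ) = a ∧ (t r).2 = j) = {⟨a, ha⟩} := by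
        ext r
        simp only [Finset.mem_filter, Finset.mem_univ, true_and, Finset.mem_singleton]
        constructor
        · rintro ⟨h1, _⟩; exact Fin.ext h1
        · rintro rfl; exact ⟨rfl, h⟩
      rw [this]; simp
    · rw [if_neg h]
      have : (Finset.univ.filter fun r : Fin n => (r:ℕ) = a ∧ (t r).2 = j) = ∅ := by
        ext r
        simp only [Finset.mem_filter, Finset.mem_univ, true_and, Finset.notMem_empty, iff_false,
          not_and]
        intro h1 h2
        have hr : r = ⟨a, ha⟩ := Fin.ext h1
        rw [hr] at h2
        exact h h2
      rw [this]; simp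
  · rw [Finset.disjoint_left]
    intro r hr hr'
    simp only [Finset.mem_filter, Finset.mem_univ, true_and] at hr hr'
    omega


lemma pth_step (n : ℕ) (t : Fin n → ℕ × ℕ) (ht2 : ∀ i, (t i).2 < 2) (a : ℕ) (ha : a < n) :
    pth n t (a+1) = pth n t a + 1 ∨ pth n t (a+1) = pth n t a - 1 := by
  have h0 := cntCol_succ n t a 0 ha
  have h1 := cntCol_succ n t a 1 ha
  have h2 := ht2 ⟨a, ha⟩
  unfold pth
  interval_cases h : (t ⟨a, ha⟩).2
  · left; rw [h0, h1]; simp [h]; push_cast; ring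
  · right; rw [h0, h1]; simp [h]; push_cast; ring

lemma pth_nonneg (n : ℕ) (t : Fin n → ℕ × ℕ) (ht : IsStdTab n t) (a : ℕ) :
    0 ≤ pth n t a := by
  unfold pth
  rw [sub_nonneg, Int.ofNat_le]
  classical
  have hex : ∀ r : Fin n, ∃ r' : Fin n, t r' = ((t r).1, 0) :=
    fun r => ht.2.1 r (t r).1 0 le_rfl (Nat.zero_le _)
  set g : Fin n → Fin n := fun r => Classical.choose (hex r) with hg
  have hgspec : ∀ r, t (g r) = ((t r).1, 0) := fun r => Classical.choose_spec (hex r)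
  apply Finset.card_le_card_of_injOn g
  · intro r hr
    simp only [Finset.mem_coe, Finset.mem_filter, Finset.mem_univ, true_and] at hr ⊢
    have hle : g r ≤ r := by
      apply ht.2.2
      · rw [hgspec r]
      · rw [hgspec r]; exact Nat.zero_le _
    exact ⟨lt_of_le_of_lt (by exact_mod_cast hle) hr.1, by rw [hgspec r]⟩
  · intro r1 h1 r2 h2 heq
    simp only [Finset.mem_coe, Finset.mem_filter, Finset.mem_univ, true_and] at h1 h2
    apply ht.1
    have := hgspec r1
    rw [heq, hgspec r2] at this
    have hrow : (t r2).1 = (t r1).1 := by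
      have := congrArg Prod.fst this; simpa using this
    exact Prod.ext hrow.symm (by rw [h1.2, h2.2])

lemma regPath_eq_iff (f : ℤ) (n : ℕ) (π : ℕ → ℤ) (h : (wallTimes f n π).Nonempty) :
    regPath f n π = π ↔ ¬ (π n < π ((wallTimes f n π).max' h)) := by
  set a := (wallTimes f n π).max' h with ha
  have ham : a ∈ wallTimes f n π := Finset.max'_mem _ h
  have han : a ≤ n := by
    simp only [wallTimes, Finset.mem_filter, Finset.mem_range] at ham; omega
  unfold regPath
  rw [dif_pos h]
  show (if π n < π a then (fun b => if b ≤ a then π b else 2 * π a - π b) else π) = π ↔ _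
  by_cases hlt : π n < π a
  · rw [if_pos hlt]
    constructor
    · intro heq; exfalso
      have han' : a < n := by
        rcases lt_or_eq_of_le han with h' | h'
        · exact h'
        · rw [h'] at hlt; omega
      have := congrFun heq n
      rw [if_neg (by omega)] at this
      omega
    · intro h'; exact absurd hlt h'
  · rw [if_neg hlt]; simp [hlt]

lemma regPath_spec (f : ℤ) (n : ℕ) (π : ℕ → ℤ) (h : regPath f n π ≠ π) :
    ∃ hne : (wallTimes f n π).Nonempty,
      π n < π ((wallTimes f n π).max' hne) ∧
      regPath f n π =
        fun b => if b ≤ (wallTimes f n π).max' hne then π b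
          else 2 * π ((wallTimes f n π).max' hne) - π b := by
  by_cases hne : (wallTimes f n π).Nonempty
  · refine ⟨hne, ?_, ?_⟩
    · by_contra hlt
      exact h ((regPath_eq_iff f n π hne).mpr hlt)
    · have hlt : π n < π ((wallTimes f n π).max' hne) := by
        by_contra hlt
        exact h ((regPath_eq_iff f n π hne).mpr hlt)
      unfold regPath
      rw [dif_pos hne]
      show (if π n < π ((wallTimes f n π).max' hne) then _ else π) = _
      rw [if_pos hlt]
  · exfalso; apply h; unfold regPath; rw [dif_neg hne]

theorem stmt12 (e p : ℕ) (he : 2 ≤ e) (hp : p.Prime) (b n : ℕ)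
    (t s : Fin n → ℕ × ℕ)
    (ht : IsStdTab n t) (ht2 : ∀ i, (t i).2 < 2)
    (hs : IsStdTab n s) (hs2 : ∀ i, (s i).2 < 2)
    (hreg : pth n s = regPath ((e : ℤ) * (p : ℤ) ^ b) n (pth n t))
    (hne : pth n s ≠ pth n t)
    (hdvd : ¬ ((e : ℤ) ∣ pth n t n + 1)) :
    regPath (e : ℤ) n (pth n t) = pth n t ↔
      regPath (e : ℤ) n (pth n s) ≠ pth n s := by
  set f : ℤ := (e : ℤ) * (p : ℤ) ^ b with hf
  set π : ℕ → ℤ := pth n t with hπ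
  set σ : ℕ → ℤ := pth n s with hσdef
  have hregne : regPath f n π ≠ π := fun h => hne (hreg.trans h)
  obtain ⟨hNE, hlt, hform⟩ := regPath_spec f n π hregne
  set a : ℕ := (wallTimes f n π).max' hNE with ha
  set w : ℤ := π a with hw
  have hσ : ∀ c, σ c = if c ≤ a then π c else 2 * w - π c := by
    intro c; rw [hreg, hform]
  have ham : a ∈ wallTimes f n π := Finset.max'_mem _ hNE
  have hwallf : isWall f w := by
    simp only [wallTimes, Finset.mem_filter, Finset.mem_range] at ham; exact ham.2
  have han : a ≤ n := by
    simp only [wallTimes, Finset.mem_filter, Finset.mem_range] at ham; omega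
  have han' : a < n := by
    rcases lt_or_eq_of_le han with h | h
    · exact h
    · exfalso; rw [h] at hw; omega
  have hw0 : 0 ≤ w := by have := hwallf.1; omega
  have hedvdw : (e : ℤ) ∣ w + 1 := by
    have hfd : f ∣ w + 1 := Int.dvd_of_emod_eq_zero hwallf.2
    exact dvd_trans ⟨(p : ℤ) ^ b, hf⟩ hfd
  have hstep : ∀ c < n, π (c+1) = π c + 1 ∨ π (c+1) = π c - 1 :=
    fun c hc => pth_step n t ht2 c hc
  have hnonneg : ∀ c, 0 ≤ π c := fun c => pth_nonneg n t ht c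
  -- the path stays strictly below the wall after time a
  have hbound : ∀ c, a < c → c ≤ n → π c < w := by
    have key : ∀ k c, n - c = k → a < c → c ≤ n → π c < w := by
      intro k
      induction k with
      | zero =>
        intro c h0 hc hcn
        have : c = n := by omega
        rw [this]; exact hlt
      | succ k ih =>
        intro c h0 hc hcn
        have hcn' : c < n := by omega
        have hc1 : π (c+1) < w := ih (c+1) (by omega) (by omega) (by omega)
        have hne' : π c ≠ w := by
          intro hcw
          have hmem : c ∈ wallTimes f n π := by
            simp only [wallTimes, Finset.mem_filter, Finset.mem_range]
            exact ⟨by omega, hcw ▸ hwallf⟩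
          have := Finset.le_max' _ c hmem
          omega
        rcases hstep c hcn' with h | h <;> omega
    intro c hc hcn
    exact key (n - c) c rfl hc hcn
  -- walls of σ and π coincide
  have hwallσ : ∀ c ≤ n, (isWall (e : ℤ) (σ c) ↔ isWall (e : ℤ) (π c)) := by
    intro c hcn
    by_cases hca : c ≤ a
    · rw [hσ c, if_pos hca]
    · rw [hσ c, if_neg hca]
      have hb : π c < w := hbound c (by omega) hcn
      have h0 : 0 ≤ π c := hnonneg c
      unfold isWall
      have h2w : (e : ℤ) ∣ 2 * (w + 1) := Dvd.dvd.mul_left hedvdw 2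
      constructor
      · rintro ⟨_, hd⟩
        refine ⟨by omega, ?_⟩
        have hd' : (e : ℤ) ∣ 2 * w - π c + 1 := Int.dvd_of_emod_eq_zero hd
        have : (e : ℤ) ∣ π c + 1 := by
          have heq : π c + 1 = 2 * (w + 1) - (2 * w - π c + 1) := by ring
          rw [heq]; exact dvd_sub h2w hd'
        exact Int.emod_eq_zero_of_dvd this
      · rintro ⟨_, hd⟩
        refine ⟨by omega, ?_⟩
        have hd' : (e : ℤ) ∣ π c + 1 := Int.dvd_of_emod_eq_zero hd
        have : (e : ℤ) ∣ 2 * w - π c + 1 := by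
          have heq : 2 * w - π c + 1 = 2 * (w + 1) - (π c + 1) := by ring
          rw [heq]; exact dvd_sub h2w hd'
        exact Int.emod_eq_zero_of_dvd this
  have hset : wallTimes (e : ℤ) n σ = wallTimes (e : ℤ) n π := by
    unfold wallTimes
    apply Finset.filter_congr
    intro c hc
    simp only [Finset.mem_range] at hc
    exact hwallσ c (by omega)
  -- nonemptiness for e-walls
  have hwe : isWall (e : ℤ) w := ⟨hwallf.1, Int.emod_eq_zero_of_dvd hedvdw⟩
  have hNEπ : (wallTimes (e : ℤ) n π).Nonempty := by
    refine ⟨a, ?_⟩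
    simp only [wallTimes, Finset.mem_filter, Finset.mem_range]
    exact ⟨by omega, hwe⟩
  have hNEσ : (wallTimes (e : ℤ) n σ).Nonempty := by rw [hset]; exact hNEπ
  set a' : ℕ := (wallTimes (e : ℤ) n π).max' hNEπ with ha'
  have ha'm : a' ∈ wallTimes (e : ℤ) n π := Finset.max'_mem _ hNEπ
  have ha'n : a' ≤ n := by
    simp only [wallTimes, Finset.mem_filter, Finset.mem_range] at ha'm; omega
  have hwa' : isWall (e : ℤ) (π a') := by
    simp only [wallTimes, Finset.mem_filter, Finset.mem_range] at ha'm; exact ha'm.2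
  have haa' : a ≤ a' := Finset.le_max' _ a (by
    simp only [wallTimes, Finset.mem_filter, Finset.mem_range]; exact ⟨by omega, hwe⟩)
  have hmaxσ : (wallTimes (e : ℤ) n σ).max' hNEσ = a' := by
    apply le_antisymm
    · apply Finset.le_max'
      rw [← hset]; exact Finset.max'_mem _ hNEσ
    · apply Finset.le_max'
      rw [hset]; exact ha'm
  -- key values
  have hσa' : σ a' = 2 * w - π a' := by
    rw [hσ a']
    by_cases h : a' ≤ a
    · have heq : a' = a := le_antisymm h haa'
      rw [if_pos h, heq, ← hw]
      omega
    · rw [if_neg h]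
  have hσn : σ n = 2 * w - π n := by rw [hσ n, if_neg (by omega)]
  have hna' : π a' ≠ π n := by
    intro hcontra
    apply hdvd
    rw [← hcontra]
    exact Int.dvd_of_emod_eq_zero hwa'.2
  rw [regPath_eq_iff (e : ℤ) n π hNEπ, ← ha', Ne,
    regPath_eq_iff (e : ℤ) n σ hNEσ, hmaxσ, hσa', hσn]
  omega
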